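/- Let G be a connected simple graph on n ≥ 3 vertices with Randić index R and minimum degree δ. Then n/(2(n-1)) ≤ R/δ ≤ (3n - 7 + √6 + 3√2)/6. -/

import Mathlib

open Finset Real Matrix

set_option linter.unusedSectionVars false

/-- The Randić index of a finite simple graph:
`R(G) = ∑_{uv ∈ E(G)} 1/√(d(u)·d(v))`. -/
noncomputable def randicIndex {V : Type*} [Fintype V] (G : SimpleGraph V) : ℝ :=
  letI : DecidableRel G.Adj := Classical.decRel _
  ∑ e ∈ G.edgeFinset,
    Sym2.lift ⟨fun u v => 1 / Real.sqrt ((G.degree u : ℝ) * (G.degree v : ℝ)),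
      fun u v => by simp [mul_comm]⟩ e

/-- The algebraic connectivity of a graph on `Fin n`: the second smallest eigenvalue
of the Laplacian matrix, characterized (via Courant–Fischer, since the all-ones vector
is an eigenvector of the smallest eigenvalue `0`) as the infimum of the Rayleigh
quotient over nonzero vectors orthogonal to the all-ones vector. -/
noncomputable def algebraicConnectivity {n : ℕ} (G : SimpleGraph (Fin n)) : ℝ :=
  letI : DecidableRel G.Adj := Classical.decRel _
  sInf {r : ℝ | ∃ x : Fin n → ℝ, x ≠ 0 ∧ (∑ i, x i) = 0 ∧
    r = (x ⬝ᵥ ((G.lapMatrix ℝ).mulVec x)) / (x ⬝ᵥ x)}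

/-- The edge connectivity of a graph: the least number of edges whose deletion
disconnects the graph. -/
noncomputable def edgeConnectivity {V : Type*} [Fintype V] (G : SimpleGraph V) : ℕ :=
  sInf {k : ℕ | ∃ s : Set (Sym2 V), s ⊆ G.edgeSet ∧ s.ncard = k ∧
    ¬ (G.deleteEdges s).Connected}

/-- The star `K_{1,n-1}` on vertex set `Fin n`: vertex `0` is adjacent to all others. -/
def starGraph (n : ℕ) : SimpleGraph (Fin n) where
  Adj i j := i ≠ j ∧ ((i : ℕ) = 0 ∨ (j : ℕ) = 0)
  symm := ⟨fun _ _ h => ⟨h.1.symm, h.2.symm⟩⟩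
  loopless := ⟨fun _ h => h.1 rfl⟩

/-! ### Auxiliary numeric lemmas -/

private lemma s2_facts : Real.sqrt 2 * Real.sqrt 2 = 2 ∧ 1.414 ≤ Real.sqrt 2 ∧ Real.sqrt 2 ≤ 1.415 := by
  refine ⟨Real.mul_self_sqrt (by norm_num), ?_, ?_⟩
  · nlinarith [Real.sq_sqrt (by norm_num : (2:ℝ) ≥ 0), Real.sqrt_nonneg 2]
  · nlinarith [Real.sq_sqrt (by norm_num : (2:ℝ) ≥ 0), Real.sqrt_nonneg 2]

private lemma s3_facts : Real.sqrt 3 * Real.sqrt 3 = 3 ∧ 1.732 ≤ Real.sqrt 3 ∧ Real.sqrt 3 ≤ 1.7321 := by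
  refine ⟨Real.mul_self_sqrt (by norm_num), ?_, ?_⟩
  · nlinarith [Real.sq_sqrt (by norm_num : (3:ℝ) ≥ 0), Real.sqrt_nonneg 3]
  · nlinarith [Real.sq_sqrt (by norm_num : (3:ℝ) ≥ 0), Real.sqrt_nonneg 3]

private lemma s6_facts : Real.sqrt 6 = Real.sqrt 2 * Real.sqrt 3 ∧ 2.449 ≤ Real.sqrt 6 := by
  have h : Real.sqrt 6 = Real.sqrt 2 * Real.sqrt 3 := by
    rw [← Real.sqrt_mul (by norm_num : (0:ℝ) ≤ 2)]; norm_num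
  exact ⟨h, by nlinarith [Real.sq_sqrt (by norm_num : (6:ℝ) ≥ 0), Real.sqrt_nonneg 6]⟩

private lemma num1 {x : ℝ} (hx : Real.sqrt 3 ≤ x) :
    7/6 - Real.sqrt 6/6 - Real.sqrt 2/2 ≤ (1 - 1/x)^2/2 := by
  obtain ⟨h2a, h2b, -⟩ := s2_facts
  obtain ⟨h3a, h3b, h3c⟩ := s3_facts
  obtain ⟨h6a, h6b⟩ := s6_facts
  have hx0 : 0 < x := lt_of_lt_of_le (by nlinarith) hx
  have ht : 1/x ≤ 1/Real.sqrt 3 := one_div_le_one_div_of_le (by nlinarith) hx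
  have ht2 : 1/Real.sqrt 3 ≤ 0.578 := by
    rw [div_le_iff₀ (by nlinarith)]; nlinarith
  have ht0 : 0 ≤ 1/x := by positivity
  nlinarith [sq_nonneg (1 - 1/x - 0.422)]

private lemma num2 {x : ℝ} (hx : Real.sqrt 2 ≤ x) :
    3/4 - Real.sqrt 2/2 ≤ (1 - 1/x)^2/2 := by
  obtain ⟨h2a, h2b, h2c⟩ := s2_facts
  have hx0 : 0 < x := lt_of_lt_of_le (by nlinarith) hx
  set s := Real.sqrt 2
  have hs0 : 0 < s := by nlinarith
  have ht : 1/x ≤ s/2 := by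
    rw [div_le_div_iff₀ hx0 (by norm_num)]
    nlinarith [mul_le_mul_of_nonneg_left hx hs0.le]
  have ht0 : 0 ≤ 1/x := by positivity
  nlinarith [mul_nonneg (sub_nonneg.2 ht) (by nlinarith : (0:ℝ) ≤ 2 - s/2 - 1/x)]

private lemma num3 {x : ℝ} (hx : Real.sqrt 3 ≤ x) :
    5/12 - Real.sqrt 6/6 ≤ (1/Real.sqrt 2 - 1/x)^2/2 := by
  obtain ⟨h2a, h2b, h2c⟩ := s2_facts
  obtain ⟨h3a, h3b, h3c⟩ := s3_facts
  obtain ⟨h6a, -⟩ := s6_facts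
  set s := Real.sqrt 2
  set u := Real.sqrt 3
  have hs0 : 0 < s := by nlinarith
  have hu0 : 0 < u := by nlinarith
  have hx0 : 0 < x := lt_of_lt_of_le hu0 hx
  have hinv : 1/s = s/2 := by
    rw [div_eq_div_iff hs0.ne' (by norm_num : (2:ℝ) ≠ 0)]; nlinarith
  have ht : 1/x ≤ u/3 := by
    rw [div_le_div_iff₀ hx0 (by norm_num)]
    nlinarith [mul_le_mul_of_nonneg_left hx hu0.le]
  have ht0 : 0 ≤ 1/x := by positivity
  have h2nd : 1/x ≤ s - u/3 := by nlinarith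
  rw [hinv, h6a]
  nlinarith [mul_nonneg (sub_nonneg.2 ht) (sub_nonneg.2 h2nd)]

private lemma num5 : 7/6 - Real.sqrt 6/6 - Real.sqrt 2/2 ≤ 2*(3/4 - Real.sqrt 2/2) := by
  obtain ⟨-, -, h2c⟩ := s2_facts
  obtain ⟨-, h6b⟩ := s6_facts
  nlinarith

/-! ### Auxiliary graph lemmas -/

section Aux

variable {V : Type*} [Fintype V] [DecidableEq V] {G : SimpleGraph V} [DecidableRel G.Adj]

private lemma deg_pos (hG : G.Connected) (hcard : 2 ≤ Fintype.card V) (v : V) :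
    0 < G.degree v := by
  rw [G.degree_pos_iff_exists_adj]
  obtain ⟨w, hw⟩ := Fintype.exists_ne_of_one_lt_card hcard v
  obtain ⟨p⟩ := hG.preconnected v w
  cases p with
  | nil => exact absurd rfl hw
  | cons h _ => exact ⟨_, h⟩

private lemma unique_nbr {u v w : V} (hu : G.degree u = 1) (hv : G.Adj u v) (hw : G.Adj u w) :
    v = w := by
  have hv' : v ∈ G.neighborFinset u := by simpa using hv
  have hw' : w ∈ G.neighborFinset u := by simpa using hw
  have := Finset.card_le_one.mp (by rw [G.card_neighborFinset_eq_degree u, hu])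
  exact this v hv' w hw'

private lemma walk_stuck {u v : V} (hu : G.degree u = 1) (hv : G.degree v = 1) (huv : G.Adj u v)
    {a b : V} (p : G.Walk a b) (ha : a = u ∨ a = v) : b = u ∨ b = v := by
  induction p with
  | nil => exact ha
  | cons h q ih =>
    apply ih
    rcases ha with rfl | rfl
    · exact Or.inr (unique_nbr hu huv h).symm
    · exact Or.inl (unique_nbr hv huv.symm h).symm

private lemma nbr_deg_two (hG : G.Connected) (hcard : 3 ≤ Fintype.card V) {u v : V}
    (hu : G.degree u = 1) (huv : G.Adj u v) : 2 ≤ G.degree v := by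
  by_contra h
  push_neg at h
  have hv1 : G.degree v = 1 := by
    have := deg_pos hG (by omega) v; omega
  obtain ⟨x, hx⟩ : ∃ x : V, x ≠ u ∧ x ≠ v := by
    by_contra hc
    push_neg at hc
    have hsub : (Finset.univ : Finset V) ⊆ {u, v} := fun x _ => by
      by_cases hxu : x = u
      · simp [hxu]
      · simp [hc x hxu]
    have : Fintype.card V ≤ 2 := by
      calc Fintype.card V = #(Finset.univ : Finset V) := (Finset.card_univ).symm
      _ ≤ #({u, v} : Finset V) := Finset.card_le_card hsub
      _ ≤ 2 := Finset.card_insert_le _ _ |>.trans (by simp)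
    omega
  obtain ⟨p⟩ := hG.preconnected u x
  rcases walk_stuck hu hv1 huv p (Or.inl rfl) with h' | h'
  · exact hx.1 h'
  · exact hx.2 h'

private lemma exists_mid_edge {a b : V} (p : G.Walk a b) (ha : G.degree a ≤ 2)
    (hb : 3 ≤ G.degree b) :
    ∃ x y, G.Adj x y ∧ G.degree x ≤ 2 ∧ 3 ≤ G.degree y := by
  induction p with
  | nil => omega
  | @cons a c b h q ih =>
    by_cases hc : 3 ≤ G.degree c
    · exact ⟨a, c, h, ha, hc⟩
    · exact ih (by omega) hb

private lemma exists_second_pendant (hG : G.Connected) (hcard : 3 ≤ Fintype.card V)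
    (hall : ∀ v, G.degree v ≤ 2) {u : V} (hu : G.degree u = 1) :
    ∃ u', u' ≠ u ∧ G.degree u' = 1 := by
  have heven := G.even_card_odd_degree_vertices
  have hmem : u ∈ Finset.univ.filter (fun v => Odd (G.degree v)) := by simp [hu]
  have hk1 : 0 < #(Finset.univ.filter (fun v => Odd (G.degree v))) :=
    Finset.card_pos.mpr ⟨u, hmem⟩
  have hk2 : 1 < #(Finset.univ.filter (fun v => Odd (G.degree v))) := by
    rcases heven with ⟨k, hk⟩; omega
  obtain ⟨u', hu'mem, hu'ne⟩ := Finset.exists_mem_ne hk2 u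
  refine ⟨u', hu'ne, ?_⟩
  have hodd : Odd (G.degree u') := (Finset.mem_filter.mp hu'mem).2
  have h2 := hall u'
  have h0 := deg_pos hG (by omega) u'
  interval_cases hd : G.degree u'
  · rfl
  · exact absurd hodd (by simp [hd])

end Aux

/-! ### Sum identities -/

section Sums

variable {V : Type*} [Fintype V] [DecidableEq V] (G : SimpleGraph V) [DecidableRel G.Adj]

private lemma randicIndex_def :
    randicIndex G = ∑ e ∈ G.edgeFinset,
      Sym2.lift ⟨fun u v => 1 / Real.sqrt ((G.degree u : ℝ) * (G.degree v : ℝ)),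
        fun u v => by simp [mul_comm]⟩ e := by
  unfold randicIndex
  congr!

private lemma sum_edgeFinset_lift (φ : V → V → ℝ) (hφ : ∀ a b : V, φ a b = φ b a) :
    2 * ∑ e ∈ G.edgeFinset, Sym2.lift ⟨φ, hφ⟩ e = ∑ v, ∑ w ∈ G.neighborFinset v, φ v w := by
  have key : ∑ d : G.Dart, φ d.fst d.snd = 2 * ∑ e ∈ G.edgeFinset, Sym2.lift ⟨φ, hφ⟩ e := by
    rw [← Finset.sum_fiberwise_of_maps_to (g := SimpleGraph.Dart.edge)
      (t := G.edgeFinset) (fun d _ => by simp [SimpleGraph.Dart.edge_mem]),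
      Finset.mul_sum]
    refine Finset.sum_congr rfl fun e he => ?_
    rw [SimpleGraph.mem_edgeFinset] at he
    revert he
    refine Sym2.ind (fun a b he => ?_) e
    have hd : ({d' : G.Dart | d'.edge = (⟨(a,b), he⟩ : G.Dart).edge} : Finset _)
        = {(⟨(a,b), he⟩ : G.Dart), (⟨(a,b), he⟩ : G.Dart).symm} :=
      SimpleGraph.Dart.edge_fiber _
    have hd' : (Finset.univ.filter fun d' : G.Dart => d'.edge = s(a, b))
        = {(⟨(a,b), he⟩ : G.Dart), (⟨(a,b), he⟩ : G.Dart).symm} := hd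
    rw [hd', Finset.sum_pair (SimpleGraph.Dart.symm_ne _).symm]
    simp [hφ b a, two_mul]
  rw [← key,
    ← Finset.sum_fiberwise_of_maps_to (g := fun d : G.Dart => d.fst)
      (t := Finset.univ) (fun d _ => Finset.mem_univ _)]
  refine Finset.sum_congr rfl fun v _ => ?_
  have h1 : (Finset.univ.filter fun d : G.Dart => d.fst = v)
      = Finset.univ.image (G.dartOfNeighborSet v) := SimpleGraph.dart_fst_fiber G v
  rw [h1, Finset.sum_image (fun a _ b _ h => G.dartOfNeighborSet_injective v h)]
  have h2 : ∀ w : G.neighborSet v, (G.dartOfNeighborSet v w).fst = v := fun _ => rfl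
  have h3 : ∀ w : G.neighborSet v, (G.dartOfNeighborSet v w).snd = (w : V) := fun _ => rfl
  simp only [h2, h3]
  exact (Finset.sum_toFinset_eq_subtype (· ∈ G.neighborSet v) (fun w => φ v w)).symm

private lemma sum_half_deg (hdeg : ∀ v, 0 < G.degree v) :
    ∑ e ∈ G.edgeFinset, Sym2.lift
      ⟨fun a b => (1:ℝ)/(2*G.degree a) + 1/(2*G.degree b), fun a b => by ring⟩ e
      = (Fintype.card V : ℝ) / 2 := by
  have h := sum_edgeFinset_lift G (fun a b => (1:ℝ)/(2*G.degree a) + 1/(2*G.degree b))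
    (fun a b => by ring)
  have hrhs : ∑ v, ∑ w ∈ G.neighborFinset v, ((1:ℝ)/(2*G.degree v) + 1/(2*G.degree w))
      = Fintype.card V := by
    have swap : ∑ v, ∑ w ∈ G.neighborFinset v, (1:ℝ)/(2*G.degree w)
        = ∑ v, ∑ w ∈ G.neighborFinset v, (1:ℝ)/(2*G.degree v) := by
      simp only [SimpleGraph.neighborFinset_eq_filter, Finset.sum_filter]
      rw [Finset.sum_comm]
      exact Finset.sum_congr rfl fun v _ => Finset.sum_congr rfl fun w _ => by
        simp [G.adj_comm]
    have const : ∀ v, ∑ w ∈ G.neighborFinset v, (1:ℝ)/(2*G.degree v) = 1/2 := by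
      intro v
      rw [Finset.sum_const, SimpleGraph.card_neighborFinset_eq_degree, nsmul_eq_mul]
      have : (G.degree v : ℝ) ≠ 0 := Nat.cast_ne_zero.2 (hdeg v).ne'
      field_simp
    simp only [Finset.sum_add_distrib, swap, const]
    simp [Finset.sum_const, Finset.card_univ]
    ring
  rw [hrhs] at h
  linarith

/-- The deficiency function. -/
private noncomputable def fdef (G : SimpleGraph V) [DecidableRel G.Adj] : Sym2 V → ℝ :=
  Sym2.lift ⟨fun a b => (1/Real.sqrt (G.degree a) - 1/Real.sqrt (G.degree b))^2/2,
    fun a b => by ring_nf⟩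

private lemma fdef_mk (a b : V) :
    fdef G s(a, b) = (1/Real.sqrt (G.degree a) - 1/Real.sqrt (G.degree b))^2/2 := rfl

private lemma fdef_nonneg (e : Sym2 V) : 0 ≤ fdef G e := by
  refine Sym2.ind (fun a b => ?_) e
  rw [fdef_mk]
  positivity

private lemma randic_eq (hdeg : ∀ v, 0 < G.degree v) :
    randicIndex G = (Fintype.card V : ℝ) / 2 - ∑ e ∈ G.edgeFinset, fdef G e := by
  rw [randicIndex_def, ← sum_half_deg G hdeg, ← Finset.sum_sub_distrib]
  refine Finset.sum_congr rfl fun e he => ?_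
  rw [SimpleGraph.mem_edgeFinset] at he
  revert he
  refine Sym2.ind (fun a b he => ?_) e
  rw [fdef_mk]
  show (1:ℝ) / Real.sqrt ((G.degree a : ℝ) * (G.degree b : ℝ))
      = (1/(2*(G.degree a:ℝ)) + 1/(2*(G.degree b:ℝ)))
        - (1/Real.sqrt (G.degree a) - 1/Real.sqrt (G.degree b))^2/2
  have ha : (0:ℝ) < G.degree a := Nat.cast_pos.2 (hdeg a)
  have hb : (0:ℝ) < G.degree b := Nat.cast_pos.2 (hdeg b)
  have hsa : Real.sqrt (G.degree a) > 0 := Real.sqrt_pos.2 ha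
  have hsb : Real.sqrt (G.degree b) > 0 := Real.sqrt_pos.2 hb
  have hmul : Real.sqrt ((G.degree a : ℝ) * G.degree b)
      = Real.sqrt (G.degree a) * Real.sqrt (G.degree b) := Real.sqrt_mul ha.le _
  have h2a : Real.sqrt (G.degree a) * Real.sqrt (G.degree a) = G.degree a :=
    Real.mul_self_sqrt ha.le
  have h2b : Real.sqrt (G.degree b) * Real.sqrt (G.degree b) = G.degree b :=
    Real.mul_self_sqrt hb.le
  have key : ∀ x y : ℝ, 0 < x → 0 < y →
      1/(x*y) = (1/(2*(x*x)) + 1/(2*(y*y))) - (1/x - 1/y)^2/2 := by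
    intro x y hx hy
    field_simp
    ring
  have hkey := key _ _ hsa hsb
  rw [h2a, h2b] at hkey
  rw [hmul]
  exact hkey

end Sums

set_option maxHeartbeats 2000000 in
theorem randic_div_minDegree_bounds
    {n : ℕ} (hn : 3 ≤ n) (G : SimpleGraph (Fin n)) [DecidableRel G.Adj] (hG : G.Connected) :
    (n : ℝ) / (2 * ((n : ℝ) - 1)) ≤ randicIndex G / (G.minDegree : ℝ) ∧
    randicIndex G / (G.minDegree : ℝ) ≤
      (3 * (n : ℝ) - 7 + Real.sqrt 6 + 3 * Real.sqrt 2) / 6 := by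
  have hcard : Fintype.card (Fin n) = n := Fintype.card_fin n
  have hcard3 : 3 ≤ Fintype.card (Fin n) := by omega
  have hdeg : ∀ v, 0 < G.degree v := deg_pos hG (by omega)
  haveI : Nonempty (Fin n) := ⟨⟨0, by omega⟩⟩
  obtain ⟨vmin, hvmin⟩ := G.exists_minimal_degree_vertex
  have hδpos : 0 < G.minDegree := hvmin ▸ hdeg vmin
  have hδR : (0:ℝ) < (G.minDegree : ℝ) := Nat.cast_pos.2 hδpos
  have hn1 : (0:ℝ) < (n:ℝ) - 1 := by
    have : (3:ℝ) ≤ n := by exact_mod_cast hn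
    linarith
  -- Notation
  set R := randicIndex G with hR
  set δ := G.minDegree with hδ
  set m := #G.edgeFinset with hm
  clear_value R δ m
  constructor
  · -- lower bound
    have hedge : ∀ e ∈ G.edgeFinset,
        (1:ℝ)/((n:ℝ)-1) ≤ Sym2.lift ⟨fun u v => 1 / Real.sqrt ((G.degree u : ℝ) * (G.degree v : ℝ)),
          fun u v => by simp [mul_comm]⟩ e := by
      intro e he
      rw [SimpleGraph.mem_edgeFinset] at he
      revert he
      refine Sym2.ind (fun a b he => ?_) e
      show (1:ℝ)/((n:ℝ)-1) ≤ 1 / Real.sqrt ((G.degree a : ℝ) * (G.degree b : ℝ))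
      have hda : G.degree a ≤ n - 1 := by
        have := G.degree_lt_card_verts a; omega
      have hdb : G.degree b ≤ n - 1 := by
        have := G.degree_lt_card_verts b; omega
      have hdaR : (G.degree a : ℝ) ≤ (n:ℝ) - 1 := by
        have : (G.degree a : ℝ) ≤ ((n - 1 : ℕ) : ℝ) := Nat.cast_le.2 hda
        have hcast : ((n - 1 : ℕ) : ℝ) = (n:ℝ) - 1 := by
          have : 1 ≤ n := by omega
          push_cast [this]; ring
        linarith
      have hdbR : (G.degree b : ℝ) ≤ (n:ℝ) - 1 := by
        have : (G.degree b : ℝ) ≤ ((n - 1 : ℕ) : ℝ) := Nat.cast_le.2 hdb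
        have hcast : ((n - 1 : ℕ) : ℝ) = (n:ℝ) - 1 := by
          have : 1 ≤ n := by omega
          push_cast [this]; ring
        linarith
      have hpa : (0:ℝ) < G.degree a := Nat.cast_pos.2 (hdeg a)
      have hpb : (0:ℝ) < G.degree b := Nat.cast_pos.2 (hdeg b)
      have hsq : Real.sqrt ((G.degree a : ℝ) * G.degree b) ≤ (n:ℝ) - 1 := by
        rw [show (n:ℝ) - 1 = Real.sqrt (((n:ℝ)-1)^2) from (Real.sqrt_sq hn1.le).symm]
        apply Real.sqrt_le_sqrt
        nlinarith
      have hsqpos : 0 < Real.sqrt ((G.degree a : ℝ) * G.degree b) :=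
        Real.sqrt_pos.2 (by positivity)
      exact one_div_le_one_div_of_le hsqpos hsq
    have hRge : (m:ℝ)/((n:ℝ)-1) ≤ R := by
      rw [hR, randicIndex_def]
      calc (m:ℝ)/((n:ℝ)-1) = ∑ _e ∈ G.edgeFinset, (1:ℝ)/((n:ℝ)-1) := by
            rw [hm, Finset.sum_const, nsmul_eq_mul]; ring
        _ ≤ _ := Finset.sum_le_sum hedge
    have hmge : (n:ℝ) * δ ≤ 2 * m := by
      have h1 : n * δ ≤ ∑ v, G.degree v := by
        calc n * δ = ∑ _v : Fin n, δ := by simp [Finset.sum_const, hcard, mul_comm]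
          _ ≤ ∑ v, G.degree v := Finset.sum_le_sum fun v _ => hδ ▸ G.minDegree_le_degree v
      have h2 : ∑ v, G.degree v = 2 * m := hm ▸ G.sum_degrees_eq_twice_card_edges
      have : n * δ ≤ 2 * m := by omega
      exact_mod_cast this
    rw [div_le_div_iff₀ (by linarith) hδR]
    have : (m:ℝ) ≤ R * ((n:ℝ)-1) := by
      rw [div_le_iff₀ hn1] at hRge; linarith
    nlinarith
  · -- upper bound
    have hreq := randic_eq G hdeg
    rw [hcard] at hreq
    have hFnn : (0:ℝ) ≤ ∑ e ∈ G.edgeFinset, fdef G e :=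
      Finset.sum_nonneg fun e _ => fdef_nonneg G e
    have hRle : R ≤ (n:ℝ)/2 := by rw [hR, hreq]; linarith
    have hR0 : (0:ℝ) ≤ R := by
      rw [hR, randicIndex_def]
      refine Finset.sum_nonneg fun e _ => ?_
      refine Sym2.ind (fun a b => ?_) e
      show (0:ℝ) ≤ 1 / Real.sqrt ((G.degree a : ℝ) * (G.degree b : ℝ))
      positivity
    obtain ⟨h2b', h2b, h2c⟩ := s2_facts
    obtain ⟨-, h6b⟩ := s6_facts
    have hnR : (3:ℝ) ≤ n := by exact_mod_cast hn
    by_cases hδ2 : 2 ≤ δ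
    · -- min degree at least 2
      have : R / δ ≤ R / 2 := by
        apply div_le_div_of_nonneg_left hR0 (by norm_num)
        exact_mod_cast hδ2
      have h2 : R / 2 ≤ (n:ℝ)/4 := by linarith
      nlinarith
    · -- min degree 1
      have hδ1 : δ = 1 := by omega
      rw [hδ1]
      simp only [Nat.cast_one, div_one]
      -- the pendant vertex
      have hu : G.degree vmin = 1 := by omega
      obtain ⟨v, huv⟩ : ∃ v, G.Adj vmin v := by
        rw [← G.degree_pos_iff_exists_adj]; omega
      have hdv : 2 ≤ G.degree v := nbr_deg_two hG hcard3 hu huv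
      -- deficiency of the pendant edge
      have hpend : 3/4 - Real.sqrt 2/2 ≤ fdef G s(vmin, v) := by
        rw [fdef_mk, hu]
        have h1 : (1:ℝ)/Real.sqrt ((1:ℕ) : ℝ) = 1 := by norm_num
        rw [h1]
        have hs : Real.sqrt 2 ≤ Real.sqrt (G.degree v) := by
          apply Real.sqrt_le_sqrt; exact_mod_cast hdv
        exact num2 hs
      have hkey : 7/6 - Real.sqrt 6/6 - Real.sqrt 2/2 ≤ ∑ e ∈ G.edgeFinset, fdef G e := by
        by_cases hbig : ∃ w, 3 ≤ G.degree w
        · obtain ⟨w, hw⟩ := hbig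
          obtain ⟨p⟩ := hG.preconnected vmin w
          obtain ⟨a, b, hab, hda, hdb⟩ := exists_mid_edge p (by omega) hw
          have hsb : Real.sqrt 3 ≤ Real.sqrt (G.degree b) := by
            apply Real.sqrt_le_sqrt; exact_mod_cast hdb
          have hmem_ab : s(a, b) ∈ G.edgeFinset := by
            rw [SimpleGraph.mem_edgeFinset]; exact hab
          have hda1 : G.degree a = 1 ∨ G.degree a = 2 := by
            have := hdeg a; omega
          rcases hda1 with hda1 | hda2
          · -- single edge (1, ≥3) suffices
            have : fdef G s(a, b) ≤ ∑ e ∈ G.edgeFinset, fdef G e :=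
              Finset.single_le_sum (fun e _ => fdef_nonneg G e) hmem_ab
            have hval : 7/6 - Real.sqrt 6/6 - Real.sqrt 2/2 ≤ fdef G s(a, b) := by
              rw [fdef_mk, hda1]
              have h1 : (1:ℝ)/Real.sqrt ((1:ℕ) : ℝ) = 1 := by norm_num
              rw [h1]
              exact num1 hsb
            linarith
          · -- two edges: pendant (1,≥2) and (2,≥3)
            have hvmin_ne_a : vmin ≠ a := fun h => by rw [h, hda2] at hu; omega
            have hvmin_ne_b : vmin ≠ b := fun h => by rw [h] at hu; omega
            have hne : s(vmin, v) ≠ s(a, b) := by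
              intro h
              rw [Sym2.eq_iff] at h
              rcases h with ⟨h1, -⟩ | ⟨h1, -⟩
              · exact hvmin_ne_a h1
              · exact hvmin_ne_b h1
            have hmem_uv : s(vmin, v) ∈ G.edgeFinset := by
              rw [SimpleGraph.mem_edgeFinset]; exact huv
            have hsum : fdef G s(vmin, v) + fdef G s(a, b) ≤ ∑ e ∈ G.edgeFinset, fdef G e := by
              rw [← Finset.sum_pair hne]
              apply Finset.sum_le_sum_of_subset_of_nonneg
              · intro e he
                rcases Finset.mem_insert.mp he with rfl | he'
                · exact hmem_uv
                · rw [Finset.mem_singleton.mp he']; exact hmem_ab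
              · exact fun e _ _ => fdef_nonneg G e
            have hval2 : 5/12 - Real.sqrt 6/6 ≤ fdef G s(a, b) := by
              rw [fdef_mk, hda2]
              have h2 : (1:ℝ)/Real.sqrt ((2:ℕ) : ℝ) = 1/Real.sqrt 2 := by norm_num
              rw [h2]
              exact num3 hsb
            linarith
        · -- all degrees ≤ 2 : two pendant edges
          push_neg at hbig
          have hall : ∀ v, G.degree v ≤ 2 := fun v => by have := hbig v; omega
          obtain ⟨u', hu'ne, hu'⟩ := exists_second_pendant hG hcard3 hall hu
          obtain ⟨v', hu'v'⟩ : ∃ v', G.Adj u' v' := by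
            rw [← G.degree_pos_iff_exists_adj]; omega
          have hdv' : 2 ≤ G.degree v' := nbr_deg_two hG hcard3 hu' hu'v'
          have hu'_ne_v : u' ≠ v := fun h => by rw [h] at hu'; omega
          have hne : s(vmin, v) ≠ s(u', v') := by
            intro h
            rw [Sym2.eq_iff] at h
            rcases h with ⟨h1, -⟩ | ⟨-, h2⟩
            · exact hu'ne h1.symm
            · exact hu'_ne_v h2.symm
          have hmem_uv : s(vmin, v) ∈ G.edgeFinset := by
            rw [SimpleGraph.mem_edgeFinset]; exact huv
          have hmem_u'v' : s(u', v') ∈ G.edgeFinset := by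
            rw [SimpleGraph.mem_edgeFinset]; exact hu'v'
          have hsum : fdef G s(vmin, v) + fdef G s(u', v') ≤ ∑ e ∈ G.edgeFinset, fdef G e := by
            rw [← Finset.sum_pair hne]
            apply Finset.sum_le_sum_of_subset_of_nonneg
            · intro e he
              rcases Finset.mem_insert.mp he with rfl | he'
              · exact hmem_uv
              · rw [Finset.mem_singleton.mp he']; exact hmem_u'v'
            · exact fun e _ _ => fdef_nonneg G e
          have hpend' : 3/4 - Real.sqrt 2/2 ≤ fdef G s(u', v') := by
            rw [fdef_mk, hu']
            have h1 : (1:ℝ)/Real.sqrt ((1:ℕ) : ℝ) = 1 := by norm_num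
            rw [h1]
            have hs : Real.sqrt 2 ≤ Real.sqrt (G.degree v') := by
              apply Real.sqrt_le_sqrt; exact_mod_cast hdv'
            exact num2 hs
          have := num5
          linarith
      rw [hR, hreq]
      linarith
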